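/- Let (A x ≤ b) ∪ (l ≤ D x ≤ u) be a split system with A ∈ ℚ^{m₁×n} and D ∈ ℚ^{m₂×n}. Let s ∈ ℚ^n be a rational solution of D x ≤ u and set g = D s ∈ ℚ^{m₂}. Then every row vector a_i of A is still an unbounded direction in the combined system (A x ≤ b) ∪ (D x = g), where D x = g is treated as the inequalities D x ≤ g together with −D x ≤ −g. -/

import Mathlib

open Matrix

/-- Direction `h ≠ 0` is bounded in the constraint system `A x ≤ b`: there exist
`l, u ∈ ℚ` such that `A x ≤ b` implies `hᵀ x ≤ u` and `−hᵀ x ≤ −l`. -/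
def Bounded {ι : Type} [Fintype ι] {n : ℕ} (A : Matrix ι (Fin n) ℚ) (b : ι → ℚ)
    (h : Fin n → ℚ) : Prop :=
  ∃ l u : ℚ, (∀ x : Fin n → ℚ, A.mulVec x ≤ b → h ⬝ᵥ x ≤ u) ∧
    (∀ x : Fin n → ℚ, A.mulVec x ≤ b → (-h) ⬝ᵥ x ≤ -l)

/-- `(A x ≤ b) ∪ (l ≤ D x ≤ u)` is a split system: all rows are nonzero,
the part `D x ≤ u` is double-bounded, all nonzero directions are unbounded in
`A x ≤ b`, and every row of `A` is unbounded in the combined system. -/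
def SplitSystem {m₁ m₂ n : ℕ} (A : Matrix (Fin m₁) (Fin n) ℚ) (b : Fin m₁ → ℚ)
    (D : Matrix (Fin m₂) (Fin n) ℚ) (u : Fin m₂ → ℚ) : Prop :=
  (∀ i : Fin m₁, A i ≠ 0) ∧ (∀ i : Fin m₂, D i ≠ 0) ∧
  (∃ l : Fin m₂ → ℚ, ∀ x : Fin n → ℚ, D.mulVec x ≤ u → ∀ i : Fin m₂, l i ≤ D.mulVec x i) ∧
  (∀ h : Fin n → ℚ, h ≠ 0 → ¬ Bounded A b h) ∧
  (∀ i : Fin m₁, ¬ Bounded (Matrix.fromRows A D) (Sum.elim b u) (A i))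

/-- Farkas–Bartl style lemma over ℚ, rows indexed by `Fin m`. -/
lemma farkas_fin {n : ℕ} : ∀ (m : ℕ) (a : Fin m → Fin n → ℚ) (h : Fin n → ℚ),
    (∀ r : Fin n → ℚ, (∀ i, a i ⬝ᵥ r ≤ 0) → h ⬝ᵥ r ≤ 0) →
    ∃ y : Fin m → ℚ, (∀ i, 0 ≤ y i) ∧ ∀ x : Fin n → ℚ, h ⬝ᵥ x = ∑ i, y i * (a i ⬝ᵥ x) := by
  intro m
  induction m with
  | zero =>
    intro a h hyp
    refine ⟨0, fun i => le_rfl, fun x => ?_⟩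
    have h1 := hyp x (fun i => i.elim0)
    have h2 := hyp (-x) (fun i => i.elim0)
    rw [dotProduct_neg] at h2
    simp only [Finset.univ_eq_empty, Finset.sum_empty]
    linarith
  | succ m ih =>
    intro a h hyp
    by_cases hc : ∀ r : Fin n → ℚ, (∀ i : Fin m, a i.castSucc ⬝ᵥ r ≤ 0) → h ⬝ᵥ r ≤ 0
    · obtain ⟨y, hy, hrep⟩ := ih (fun i => a i.castSucc) h hc
      refine ⟨Fin.snoc y 0, ?_, fun x => ?_⟩
      · intro i
        refine Fin.lastCases ?_ ?_ i
        · simp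
        · intro j; simpa using hy j
      · rw [Fin.sum_univ_castSucc]
        simp only [Fin.snoc_castSucc, Fin.snoc_last, zero_mul, add_zero]
        exact hrep x
    · push_neg at hc
      obtain ⟨r0, hr0a, hr0h⟩ := hc
      have hdr0 : 0 < a (Fin.last m) ⬝ᵥ r0 := by
        by_contra hd
        push_neg at hd
        have := hyp r0 (fun i => Fin.lastCases hd hr0a i)
        linarith
      set d : Fin n → ℚ := a (Fin.last m) with hd_def
      set c : ℚ := d ⬝ᵥ r0 with hc_def
      have hc0 : c ≠ 0 := ne_of_gt hdr0
      set a' : Fin m → Fin n → ℚ :=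
        fun i => c • a i.castSucc - (a i.castSucc ⬝ᵥ r0) • d with ha'_def
      set h' : Fin n → ℚ := c • h - (h ⬝ᵥ r0) • d with hh'_def
      have hyp' : ∀ r : Fin n → ℚ, (∀ i, a' i ⬝ᵥ r ≤ 0) → h' ⬝ᵥ r ≤ 0 := by
        intro r hr
        set w : Fin n → ℚ := c • r - (d ⬝ᵥ r) • r0 with hw_def
        have hw : ∀ i : Fin (m+1), a i ⬝ᵥ w ≤ 0 := by
          intro i
          refine Fin.lastCases ?_ ?_ i
          · have : d ⬝ᵥ w = 0 := by
              simp only [hw_def, dotProduct_sub, dotProduct_smul, smul_eq_mul, ← hc_def]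
              ring
            rw [← hd_def]  -- a (Fin.last m) = d
            linarith [this.le]
          · intro j
            have hj := hr j
            simp only [ha'_def, sub_dotProduct, smul_dotProduct, smul_eq_mul] at hj
            simp only [hw_def, dotProduct_sub, dotProduct_smul, smul_eq_mul]
            nlinarith [hj]
        have hhw := hyp w hw
        simp only [hw_def, dotProduct_sub, dotProduct_smul, smul_eq_mul] at hhw
        simp only [hh'_def, sub_dotProduct, smul_dotProduct, smul_eq_mul]
        nlinarith [hhw]
      obtain ⟨y, hy, hrep⟩ := ih a' h' hyp'
      set β : ℚ := (h ⬝ᵥ r0 - ∑ i, y i * (a i.castSucc ⬝ᵥ r0)) / c with hβ_def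
      have hβ0 : 0 ≤ β := by
        have hsum : ∑ i, y i * (a i.castSucc ⬝ᵥ r0) ≤ 0 :=
          Finset.sum_nonpos (fun i _ => mul_nonpos_of_nonneg_of_nonpos (hy i) (hr0a i))
        have : 0 < h ⬝ᵥ r0 - ∑ i, y i * (a i.castSucc ⬝ᵥ r0) := by linarith
        positivity
      refine ⟨Fin.snoc y β, ?_, fun x => ?_⟩
      · intro i
        refine Fin.lastCases ?_ ?_ i
        · simpa using hβ0
        · intro j; simpa using hy j
      · have hrx := hrep x
        have hexp : ∀ i : Fin m, y i * (a' i ⬝ᵥ x)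
            = c * (y i * (a i.castSucc ⬝ᵥ x)) - (y i * (a i.castSucc ⬝ᵥ r0)) * (d ⬝ᵥ x) := by
          intro i
          simp only [ha'_def, sub_dotProduct, smul_dotProduct, smul_eq_mul]
          ring
        rw [Finset.sum_congr rfl (fun i _ => hexp i)] at hrx
        rw [Finset.sum_sub_distrib, ← Finset.mul_sum, ← Finset.sum_mul] at hrx
        simp only [hh'_def, sub_dotProduct, smul_dotProduct, smul_eq_mul] at hrx
        rw [Fin.sum_univ_castSucc]
        simp only [Fin.snoc_castSucc, Fin.snoc_last, ← hd_def]
        have key : c * (h ⬝ᵥ x) = c * ((∑ i, y i * (a i.castSucc ⬝ᵥ x)) + β * (d ⬝ᵥ x)) := by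
          rw [hβ_def]
          field_simp
          linarith [hrx]
        exact mul_left_cancel₀ hc0 key

/-- Farkas lemma for an arbitrary finite index type. -/
lemma farkas_fintype {n : ℕ} {ι : Type} [Fintype ι] (a : ι → Fin n → ℚ) (h : Fin n → ℚ)
    (hyp : ∀ r : Fin n → ℚ, (∀ i, a i ⬝ᵥ r ≤ 0) → h ⬝ᵥ r ≤ 0) :
    ∃ y : ι → ℚ, (∀ i, 0 ≤ y i) ∧ ∀ x : Fin n → ℚ, h ⬝ᵥ x = ∑ i, y i * (a i ⬝ᵥ x) := by
  classical
  obtain ⟨e⟩ : Nonempty (ι ≃ Fin (Fintype.card ι)) := ⟨Fintype.equivFin ι⟩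
  obtain ⟨y, hy, hrep⟩ := farkas_fin (Fintype.card ι) (fun k => a (e.symm k)) h
    (fun r hr => hyp r (fun i => by simpa using hr (e i)))
  refine ⟨fun i => y (e i), fun i => hy (e i), fun x => ?_⟩
  rw [hrep x]
  exact (Equiv.sum_comp e (fun k => y k * (a (e.symm k) ⬝ᵥ x))).symm.trans
    (Finset.sum_congr rfl (fun i _ => by simp))

/-- In a split system, for each row of `A` there is a ray that stays in the system,
keeps `D` fixed, and strictly decreases that row. -/
lemma exists_ray {m₁ m₂ n : ℕ} (A : Matrix (Fin m₁) (Fin n) ℚ) (b : Fin m₁ → ℚ)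
    (D : Matrix (Fin m₂) (Fin n) ℚ) (u : Fin m₂ → ℚ) (hsplit : SplitSystem A b D u)
    (j : Fin m₁) :
    ∃ r : Fin n → ℚ, A.mulVec r ≤ 0 ∧ D.mulVec r = 0 ∧ A j ⬝ᵥ r < 0 := by
  obtain ⟨hA0, hD0, ⟨l, hl⟩, hdir, hcomb⟩ := hsplit
  have hub := hcomb j
  -- unboundedness below of `A j` on the combined system
  have hex : ∀ L : ℚ, ∃ x : Fin n → ℚ, A.mulVec x ≤ b ∧ D.mulVec x ≤ u ∧ A j ⬝ᵥ x < L := by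
    intro L
    by_contra hno
    push_neg at hno
    apply hub
    refine ⟨L, b j, ?_, ?_⟩
    · intro x hx
      have := hx (Sum.inl j)
      exact (by simpa [fromRows_mulVec] using this : (A *ᵥ x) j ≤ b j)
    · intro x hx
      have h1 : A.mulVec x ≤ b := fun k => by simpa [fromRows_mulVec] using hx (Sum.inl k)
      have h2 : D.mulVec x ≤ u := fun k => by simpa [fromRows_mulVec] using hx (Sum.inr k)
      have := hno x h1 h2
      simp only [neg_dotProduct]
      linarith
  -- first produce a ray with `D r ≤ 0`
  have hray : ∃ r : Fin n → ℚ, A.mulVec r ≤ 0 ∧ D.mulVec r ≤ 0 ∧ A j ⬝ᵥ r < 0 := by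
    by_contra hno
    push_neg at hno
    obtain ⟨y, hy, hrep⟩ := farkas_fintype (Sum.elim (fun k => A k) (fun k => D k)) (-(A j))
      (by
        intro r hr
        have h1 : A.mulVec r ≤ 0 := fun k => hr (Sum.inl k)
        have h2 : D.mulVec r ≤ 0 := fun k => hr (Sum.inr k)
        have := hno r h1 h2
        simp only [neg_dotProduct]
        linarith)
    set K : ℚ := ∑ i, y i * (Sum.elim b u i) with hK_def
    obtain ⟨x, hxA, hxD, hxlt⟩ := hex (-K)
    have hbound : -(A j ⬝ᵥ x) ≤ K := by
      have := hrep x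
      rw [neg_dotProduct] at this
      rw [this, hK_def]
      refine Finset.sum_le_sum (fun i _ => ?_)
      refine mul_le_mul_of_nonneg_left ?_ (hy i)
      cases i with
      | inl k =>
        have hk : A k ⬝ᵥ x ≤ b k := hxA k
        simpa using hk
      | inr k =>
        have hk : D k ⬝ᵥ x ≤ u k := hxD k
        simpa using hk
    linarith
  obtain ⟨r, hrA, hrD, hrj⟩ := hray
  obtain ⟨x0, hx0A, hx0D, -⟩ := hex 0
  refine ⟨r, hrA, ?_, hrj⟩
  funext k
  simp only [Pi.zero_apply]
  have hrDk : ∀ k', D.mulVec r k' ≤ 0 := fun k' => hrD k'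
  refine le_antisymm (hrDk k) ?_
  by_contra hk
  push_neg at hk
  set t : ℚ := (D.mulVec x0 k - l k + 1) / (-(D.mulVec r k)) with ht_def
  have hden : 0 < -(D.mulVec r k) := by linarith
  have hnum : 0 < D.mulVec x0 k - l k + 1 := by
    have := hl x0 hx0D k
    linarith
  have ht0 : 0 < t := div_pos hnum hden
  have hx1D : D.mulVec (x0 + t • r) ≤ u := by
    intro k'
    have hterm : t * D.mulVec r k' ≤ 0 := mul_nonpos_of_nonneg_of_nonpos ht0.le (hrDk k')
    have hx := hx0D k'
    rw [mulVec_add, mulVec_smul]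
    simp only [Pi.add_apply, Pi.smul_apply, smul_eq_mul]
    linarith
  have hfin := hl (x0 + t • r) hx1D k
  rw [mulVec_add, mulVec_smul] at hfin
  have hcalc : t * D.mulVec r k = -(D.mulVec x0 k - l k + 1) := by
    rw [ht_def, div_mul_eq_mul_div, div_eq_iff hden.ne']
    ring
  simp only [Pi.add_apply, Pi.smul_apply, smul_eq_mul] at hfin
  rw [hcalc] at hfin
  linarith


/-- Persistence of Unboundedness: in a split system, if `s` is a rational solution
of `D x ≤ u` and `g = D s`, then every row `aᵢ` of `A` is still unbounded in the
combined system `(A x ≤ b) ∪ (D x = g)`, where `D x = g` stands for the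
inequalities `D x ≤ g` together with `−D x ≤ −g`. -/
theorem persistence_of_unboundedness {m₁ m₂ n : ℕ} (A : Matrix (Fin m₁) (Fin n) ℚ)
    (b : Fin m₁ → ℚ) (D : Matrix (Fin m₂) (Fin n) ℚ) (u : Fin m₂ → ℚ)
    (hsplit : SplitSystem A b D u)
    (s : Fin n → ℚ) (hs : D.mulVec s ≤ u) :
    ∀ i : Fin m₁,
      ¬ Bounded (Matrix.fromRows A (Matrix.fromRows D (-D)))
        (Sum.elim b (Sum.elim (D.mulVec s) (-(D.mulVec s)))) (A i) := by
  intro i hB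
  obtain ⟨L, U, hU, hL⟩ := hB
  -- choose rays for every row of A
  choose r hrA hrD hrj using fun j => exists_ray A b D u hsplit j
  -- step sizes repairing feasibility of `A x ≤ b` starting from `s`
  set t : Fin m₁ → ℚ := fun j => max 0 ((A.mulVec s j - b j) / (-(A j ⬝ᵥ r j))) with ht_def
  have ht0 : ∀ j, 0 ≤ t j := fun j => le_max_left _ _
  set xstar : Fin n → ℚ := s + ∑ j, t j • r j with hx_def
  have hAsum : A.mulVec (∑ j, t j • r j) = ∑ j, t j • A.mulVec (r j) := by
    rw [← mulVecLin_apply, map_sum]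
    exact Finset.sum_congr rfl (fun j _ => by rw [LinearMap.map_smul, mulVecLin_apply])
  have hDsum : D.mulVec (∑ j, t j • r j) = 0 := by
    rw [← mulVecLin_apply, map_sum]
    refine Finset.sum_eq_zero (fun j _ => ?_)
    rw [LinearMap.map_smul, mulVecLin_apply, hrD j, smul_zero]
  -- A xstar ≤ b
  have hAxstar : A.mulVec xstar ≤ b := by
    intro k
    have hexp : A.mulVec xstar k = A.mulVec s k + ∑ j, t j * A.mulVec (r j) k := by
      rw [hx_def, mulVec_add, hAsum]
      simp [Finset.sum_apply]
    have hsum_le : ∑ j, t j * A.mulVec (r j) k ≤ t k * A.mulVec (r k) k := by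
      have hsplit_sum : t k * A.mulVec (r k) k + ∑ j ∈ Finset.univ.erase k,
          t j * A.mulVec (r j) k = ∑ j, t j * A.mulVec (r j) k :=
        Finset.add_sum_erase Finset.univ (fun j => t j * A.mulVec (r j) k) (Finset.mem_univ k)
      have hrest : ∑ j ∈ Finset.univ.erase k, t j * A.mulVec (r j) k ≤ 0 :=
        Finset.sum_nonpos (fun j _ => mul_nonpos_of_nonneg_of_nonpos (ht0 j) (hrA j k))
      linarith
    have hpk : A k ⬝ᵥ r k < 0 := hrj k
    have hmvrk : A.mulVec (r k) k = A k ⬝ᵥ r k := rfl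
    have h1 : (A.mulVec s k - b k) / (-(A k ⬝ᵥ r k)) ≤ t k := le_max_right _ _
    have h2 : A.mulVec s k - b k ≤ t k * (-(A k ⬝ᵥ r k)) :=
      (div_le_iff₀ (by linarith)).mp h1
    have h3 : t k * (-(A k ⬝ᵥ r k)) = -(t k * (A k ⬝ᵥ r k)) := by ring
    rw [hexp]
    rw [hmvrk] at hsum_le
    linarith
  -- D xstar = D s
  have hDxstar : D.mulVec xstar = D.mulVec s := by
    rw [hx_def, mulVec_add, hDsum, add_zero]
  -- the escaping point
  have hpi : A i ⬝ᵥ r i < 0 := hrj i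
  set τ : ℚ := max 0 ((A i ⬝ᵥ xstar - L) / (-(A i ⬝ᵥ r i))) + 1 with hτ_def
  have hτ0 : 0 ≤ τ := by
    rw [hτ_def]
    have := le_max_left (0:ℚ) ((A i ⬝ᵥ xstar - L) / (-(A i ⬝ᵥ r i)))
    linarith
  have hτgt : (A i ⬝ᵥ xstar - L) / (-(A i ⬝ᵥ r i)) < τ := by
    rw [hτ_def]
    have := le_max_right (0:ℚ) ((A i ⬝ᵥ xstar - L) / (-(A i ⬝ᵥ r i)))
    linarith
  set x' : Fin n → ℚ := xstar + τ • r i with hx'_def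
  have hAx' : A.mulVec x' ≤ b := by
    intro k
    rw [hx'_def, mulVec_add, mulVec_smul]
    have hterm : τ * A.mulVec (r i) k ≤ 0 :=
      mul_nonpos_of_nonneg_of_nonpos hτ0 (hrA i k)
    have := hAxstar k
    simp only [Pi.add_apply, Pi.smul_apply, smul_eq_mul]
    linarith
  have hDx' : D.mulVec x' = D.mulVec s := by
    rw [hx'_def, mulVec_add, mulVec_smul, hrD i, smul_zero, add_zero, hDxstar]
  have hfeas : (Matrix.fromRows A (Matrix.fromRows D (-D))).mulVec x'
      ≤ Sum.elim b (Sum.elim (D.mulVec s) (-(D.mulVec s))) := by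
    intro idx
    rw [fromRows_mulVec, fromRows_mulVec]
    rcases idx with k | (k | k)
    · simpa using hAx' k
    · simp [hDx']
    · simp [neg_mulVec, hDx']
  have hlow := hL x' hfeas
  rw [neg_dotProduct] at hlow
  have hdot : A i ⬝ᵥ x' = A i ⬝ᵥ xstar + τ * (A i ⬝ᵥ r i) := by
    rw [hx'_def, dotProduct_add, dotProduct_smul, smul_eq_mul]
  have h4 : A i ⬝ᵥ xstar - L < τ * (-(A i ⬝ᵥ r i)) :=
    (div_lt_iff₀ (by linarith)).mp hτgt
  have h5 : τ * (-(A i ⬝ᵥ r i)) = -(τ * (A i ⬝ᵥ r i)) := by ring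
  rw [hdot] at hlow
  linarith
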